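/- Let ν be an M×N real matrix of rank M, set K = N − M, let R be an N×M real matrix, and let c¹,…,c^K be a basis of the kernel of ν, assembled into the N×K matrix C. Let A = [R | C] be the resulting N×N matrix. Suppose there are subsets 𝔪 of the column indices {1,…,M}, 𝔫 of the row indices {1,…,N}, and a subset I_s of the kernel-column indices {1,…,K} such that: (i) R(n,m) = 0 for every m ∈ 𝔪 and every n ∉ 𝔫 (output-completeness); (ii) c^α(n) = 0 for every α ∈ I_s and every n ∉ 𝔫 (the kernel vectors indexed by I_s have support in 𝔫); and (iii) |𝔪| + |I_s| = |𝔫| (the index χ of the subnetwork (𝔪,𝔫) is zero, i.e. (𝔪,𝔫) is a buffering structure). Let A_{Γs} be the |𝔫|×|𝔫| submatrix of A with rows indexed by 𝔫 and columns indexed by 𝔪 together with the kernel columns in I_s, and let A_{Γ̄s} be the complementary submatrix of A with rows indexed by the complement of 𝔫 and columns indexed by the complement of 𝔪 together with the kernel columns not in I_s. Then |det(A)| = |det(A_{Γs})| · |det(A_{Γ̄s})|. -/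

import Mathlib

open Matrix

/-- The square `N × N` matrix obtained by placing the columns of an `N × M` matrix `X`
before the columns of an `N × K` matrix `Y`, given `M + K = N`. -/
noncomputable def catCols {N M K : ℕ} (h : M + K = N)
    (X : Matrix (Fin N) (Fin M) ℝ) (Y : Matrix (Fin N) (Fin K) ℝ) :
    Matrix (Fin N) (Fin N) ℝ :=
  (Matrix.fromCols X Y).submatrix id (fun j => finSumFinEquiv.symm (Fin.cast h.symm j))

/-- The submatrix of the augmented matrix `[R | C]` with rows restricted to the reactions
satisfying `Pn` and columns restricted to the chemicals satisfying `Pm` together with the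
kernel columns satisfying `Pk`. -/
def subBlock {M N K : ℕ} (R : Matrix (Fin N) (Fin M) ℝ) (C : Matrix (Fin N) (Fin K) ℝ)
    (Pn : Fin N → Prop) (Pm : Fin M → Prop) (Pk : Fin K → Prop) :
    Matrix {n // Pn n} ({m // Pm m} ⊕ {α // Pk α}) ℝ :=
  Matrix.fromCols (R.submatrix (fun i => i.1) (fun j => j.1))
    (C.submatrix (fun i => i.1) (fun j => j.1))

/-- factorization of `|det A|` along a buffering structure `(𝔪, 𝔫)` (with
supported kernel columns `Is`) in the case of trivial cokernel:
`|det A| = |det A_Γs| * |det A_Γ̄s|`. -/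
theorem statement7 {M N K : ℕ} (hK : M + K = N)
    (ν : Matrix (Fin M) (Fin N) ℝ) (hrank : ν.rank = M)
    (R : Matrix (Fin N) (Fin M) ℝ) (C : Matrix (Fin N) (Fin K) ℝ)
    (hC : ∃ b : Module.Basis (Fin K) ℝ (LinearMap.ker ν.mulVecLin),
        ∀ k n, (b k).1 n = C n k)
    (𝔪 : Finset (Fin M)) (𝔫 : Finset (Fin N)) (Is : Finset (Fin K))
    (h1 : ∀ m ∈ 𝔪, ∀ n ∉ 𝔫, R n m = 0)
    (h2 : ∀ α ∈ Is, ∀ n ∉ 𝔫, C n α = 0)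
    (h3 : 𝔪.card + Is.card = 𝔫.card)
    (e : {n // n ∈ 𝔫} ≃ ({m // m ∈ 𝔪} ⊕ {α // α ∈ Is}))
    (e' : {n // n ∉ 𝔫} ≃ ({m // m ∉ 𝔪} ⊕ {α // α ∉ Is})) :
    |(catCols hK R C).det| =
      |((subBlock R C (· ∈ 𝔫) (· ∈ 𝔪) (· ∈ Is)).submatrix id e).det| *
      |((subBlock R C (· ∉ 𝔫) (· ∉ 𝔪) (· ∉ Is)).submatrix id e').det| := by
  classical
  set A := catCols hK R C with hA
  let colE : Fin N ≃ Fin M ⊕ Fin K := (finCongr hK.symm).trans finSumFinEquiv.symm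
  have hAcol : ∀ i j, A i (colE.symm j) = Matrix.fromCols R C i j := by
    intro i j
    have : A i (colE.symm j) = Matrix.fromCols R C i (colE (colE.symm j)) := rfl
    rw [this, Equiv.apply_symm_apply]
  let c : Fin N ≃ ({m // m ∈ 𝔪} ⊕ {α // α ∈ Is}) ⊕ ({m // m ∉ 𝔪} ⊕ {α // α ∉ Is}) :=
    colE.trans ((((Equiv.sumCompl (· ∈ 𝔪)).symm).sumCongr
      ((Equiv.sumCompl (· ∈ Is)).symm)).trans (Equiv.sumSumSumComm _ _ _ _))
  let r : Fin N ≃ ({m // m ∈ 𝔪} ⊕ {α // α ∈ Is}) ⊕ ({m // m ∉ 𝔪} ⊕ {α // α ∉ Is}) :=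
    ((Equiv.sumCompl (· ∈ 𝔫)).symm).trans (Equiv.sumCongr e e')
  have hr : ∀ x, r.symm x = (Equiv.sumCompl (· ∈ 𝔫)) ((Equiv.sumCongr e e').symm x) := by
    intro x; rfl
  have hc : ∀ x, c.symm x = colE.symm
      ((((Equiv.sumCompl (· ∈ 𝔪)).symm).sumCongr ((Equiv.sumCompl (· ∈ Is)).symm)).symm
        ((Equiv.sumSumSumComm _ _ _ _).symm x)) := by
    intro x; rfl
  have hsub : A.submatrix r.symm c.symm =
      Matrix.fromBlocks
        (((subBlock R C (· ∈ 𝔫) (· ∈ 𝔪) (· ∈ Is)).submatrix id e).submatrix e.symm e.symm)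
        ((A.submatrix r.symm c.symm).toBlocks₁₂)
        0
        (((subBlock R C (· ∉ 𝔫) (· ∉ 𝔪) (· ∉ Is)).submatrix id e').submatrix e'.symm e'.symm) := by
    ext i j
    rcases i with i | i <;> rcases j with j | j
    · rcases j with m | α
      · simp only [Matrix.submatrix_apply, hr, hc, Equiv.sumCongr_symm, Equiv.sumCongr_apply,
          Equiv.sumSumSumComm_symm, Equiv.sumSumSumComm_apply, Sum.map_inl, Equiv.symm_symm,
          Equiv.sumCompl_apply_inl, hAcol, Matrix.fromBlocks_apply₁₁, Matrix.fromCols_apply_inl,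
          subBlock, Matrix.submatrix_apply, id_eq]
        simp [Equiv.sumSumSumComm, Equiv.sumAssoc, Equiv.sumComm]
      · simp only [Matrix.submatrix_apply, hr, hc, Equiv.sumCongr_symm, Equiv.sumCongr_apply,
          Equiv.sumSumSumComm_symm, Equiv.sumSumSumComm_apply, Sum.map_inl, Equiv.symm_symm,
          Equiv.sumCompl_apply_inr, Equiv.sumCompl_apply_inl, hAcol, Matrix.fromBlocks_apply₁₁,
          Matrix.fromCols_apply_inr, subBlock, Matrix.submatrix_apply, id_eq]
        simp [Equiv.sumSumSumComm, Equiv.sumAssoc, Equiv.sumComm]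
    · rfl
    · have hn : ((Equiv.sumCompl (· ∈ 𝔫)) ((Equiv.sumCongr e e').symm (Sum.inr i))) ∉ 𝔫 :=
        (e'.symm i).2
      rcases j with m | α
      · simp only [Matrix.submatrix_apply, hr, hc, Equiv.sumCongr_symm, Equiv.sumCongr_apply,
          Equiv.sumSumSumComm_symm, Equiv.sumSumSumComm_apply, Sum.map_inr, Sum.map_inl,
          Equiv.symm_symm, Equiv.sumCompl_apply_inl, hAcol, Matrix.fromBlocks_apply₂₁,
          Matrix.fromCols_apply_inl, Matrix.zero_apply]
        exact h1 m.1 m.2 _ hn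
      · simp only [Matrix.submatrix_apply, hr, hc, Equiv.sumCongr_symm, Equiv.sumCongr_apply,
          Equiv.sumSumSumComm_symm, Equiv.sumSumSumComm_apply, Sum.map_inr, Sum.map_inl,
          Equiv.symm_symm, Equiv.sumCompl_apply_inr, Equiv.sumCompl_apply_inl, hAcol,
          Matrix.fromBlocks_apply₂₁, Matrix.fromCols_apply_inr, Matrix.zero_apply]
        exact h2 α.1 α.2 _ hn
    · rcases j with m | α
      · simp only [Matrix.submatrix_apply, hr, hc, Equiv.sumCongr_symm, Equiv.sumCongr_apply,
          Equiv.sumSumSumComm_symm, Equiv.sumSumSumComm_apply, Sum.map_inr, Equiv.symm_symm,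
          Equiv.sumCompl_apply_inl, Equiv.sumCompl_apply_inr, hAcol, Matrix.fromBlocks_apply₂₂,
          Matrix.fromCols_apply_inl, subBlock, Matrix.submatrix_apply, id_eq]
        simp [Equiv.sumSumSumComm, Equiv.sumAssoc, Equiv.sumComm]
      · simp only [Matrix.submatrix_apply, hr, hc, Equiv.sumCongr_symm, Equiv.sumCongr_apply,
          Equiv.sumSumSumComm_symm, Equiv.sumSumSumComm_apply, Sum.map_inr, Equiv.symm_symm,
          Equiv.sumCompl_apply_inr, hAcol, Matrix.fromBlocks_apply₂₂,
          Matrix.fromCols_apply_inr, subBlock, Matrix.submatrix_apply, id_eq]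
        simp [Equiv.sumSumSumComm, Equiv.sumAssoc, Equiv.sumComm]
  calc |A.det| = |(A.submatrix r.symm c.symm).det| :=
        (Matrix.abs_det_submatrix_equiv_equiv r.symm c.symm A).symm
    _ = _ := by
        rw [hsub, Matrix.det_fromBlocks_zero₂₁, abs_mul,
          Matrix.det_submatrix_equiv_self, Matrix.det_submatrix_equiv_self]
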